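/- Let P be a real polynomial whose resultant with its derivative is nonzero (equivalently, P has no repeated complex roots). Then there is a constant δ > 0 such that |P'(x)| ≥ δ for every real x with P(x) = 0; moreover for every real root x₀ of P there exist c > 0 and ε₀ > 0 such that for all 0 < ε < ε₀, the set {x ∈ ℝ : |x − x₀| < c and |P(x)| ≤ ε} has Lebesgue measure at most (4/δ)·ε. -/

import Mathlib

open MeasureTheory

lemma aux_measure (P : Polynomial ℝ) (δ : ℝ) (hδ : 0 < δ) (x₀ : ℝ)
    (h0 : δ ≤ |P.derivative.eval x₀|) :
    ∃ c : ℝ, 0 < c ∧ ∃ ε₀ : ℝ, 0 < ε₀ ∧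
      ∀ ε : ℝ, 0 < ε → ε < ε₀ →
        volume {x : ℝ | |x - x₀| < c ∧ |P.eval x| ≤ ε} ≤
          ENNReal.ofReal ((4 / δ) * ε) := by
  have hc : ContinuousAt (fun x => |P.derivative.eval x|) x₀ :=
    (P.derivative.continuous.abs).continuousAt
  obtain ⟨c, hcpos, hcball⟩ := Metric.continuousAt_iff.1 hc (δ/2) (by linarith)
  refine ⟨c, hcpos, 1, one_pos, fun ε hε hε1 => ?_⟩
  -- lower bound on |P'| in ball
  have hlow : ∀ x : ℝ, |x - x₀| < c → δ/2 ≤ |P.derivative.eval x| := by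
    intro x hx
    have := hcball (by simpa [Real.dist_eq] using hx)
    rw [Real.dist_eq] at this
    have := abs_lt.1 this
    linarith [this.1]
  -- key: for x y in the set, |x - y| ≤ 4/δ * ε
  have key : ∀ x y : ℝ, |x - x₀| < c → |y - x₀| < c → |P.eval x| ≤ ε → |P.eval y| ≤ ε →
      |y - x| ≤ (4/δ) * ε := by
    intro x y hx hy hPx hPy
    rcases lt_trichotomy x y with hxy | hxy | hxy
    · obtain ⟨ξ, hξ, hslope⟩ := exists_hasDerivAt_eq_slope (fun t => P.eval t)
        (fun t => P.derivative.eval t) hxy (P.continuous.continuousOn)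
        (fun t _ => P.hasDerivAt t)
      have hξball : |ξ - x₀| < c := by
        rw [abs_lt] at hx hy ⊢
        constructor <;> nlinarith [hξ.1, hξ.2]
      have h1 : δ/2 ≤ |P.derivative.eval ξ| := hlow ξ hξball
      have h2 : |P.eval y - P.eval x| ≤ 2 * ε := by
        calc |P.eval y - P.eval x| ≤ |P.eval y| + |P.eval x| := abs_sub _ _
          _ ≤ 2 * ε := by linarith
      have h3 : |P.derivative.eval ξ| * (y - x) = |P.eval y - P.eval x| := by
        rw [hslope]
        rw [abs_div, abs_of_pos (by linarith : (0:ℝ) < y - x)]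
        field_simp
      have h4 : (δ/2) * (y - x) ≤ 2 * ε := by
        calc (δ/2) * (y - x) ≤ |P.derivative.eval ξ| * (y - x) := by
              apply mul_le_mul_of_nonneg_right h1 (by linarith)
          _ = |P.eval y - P.eval x| := h3
          _ ≤ 2 * ε := h2
      rw [abs_of_pos (by linarith : (0:ℝ) < y - x)]
      rw [div_mul_eq_mul_div, le_div_iff₀ hδ]
      nlinarith
    · simp [hxy, le_of_lt (by positivity : (0:ℝ) < (4/δ)*ε)]
    · obtain ⟨ξ, hξ, hslope⟩ := exists_hasDerivAt_eq_slope (fun t => P.eval t)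
        (fun t => P.derivative.eval t) hxy (P.continuous.continuousOn)
        (fun t _ => P.hasDerivAt t)
      have hξball : |ξ - x₀| < c := by
        rw [abs_lt] at hx hy ⊢
        constructor <;> nlinarith [hξ.1, hξ.2]
      have h1 : δ/2 ≤ |P.derivative.eval ξ| := hlow ξ hξball
      have h2 : |P.eval x - P.eval y| ≤ 2 * ε := by
        calc |P.eval x - P.eval y| ≤ |P.eval x| + |P.eval y| := abs_sub _ _
          _ ≤ 2 * ε := by linarith
      have h3 : |P.derivative.eval ξ| * (x - y) = |P.eval x - P.eval y| := by
        rw [hslope]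
        rw [abs_div, abs_of_pos (by linarith : (0:ℝ) < x - y)]
        field_simp
      have h4 : (δ/2) * (x - y) ≤ 2 * ε := by
        calc (δ/2) * (x - y) ≤ |P.derivative.eval ξ| * (x - y) := by
              apply mul_le_mul_of_nonneg_right h1 (by linarith)
          _ = |P.eval x - P.eval y| := h3
          _ ≤ 2 * ε := h2
      rw [abs_of_neg (by linarith : y - x < 0)]
      rw [div_mul_eq_mul_div, le_div_iff₀ hδ]
      nlinarith
  calc volume {x : ℝ | |x - x₀| < c ∧ |P.eval x| ≤ ε}
      ≤ EMetric.diam {x : ℝ | |x - x₀| < c ∧ |P.eval x| ≤ ε} := Real.volume_le_diam _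
    _ ≤ ENNReal.ofReal ((4/δ) * ε) := by
        apply EMetric.diam_le
        intro x hx y hy
        rw [edist_dist, Real.dist_eq]
        exact ENNReal.ofReal_le_ofReal (key y x hy.1 hx.1 hy.2 hx.2)

/-- Quantitative transversality (4.59)-(4.60): if a real polynomial `P` has no
repeated complex roots (equivalently `Res(P, P') ≠ 0`), then there is `δ > 0`
with `|P'(x)| ≥ δ` at every real root `x` of `P`, and near each real root `x₀`
the sublevel set `{|P| ≤ ε}` has Lebesgue measure at most `(4/δ)·ε` for all
sufficiently small `ε > 0`. -/
theorem stmt_19 (P : Polynomial ℝ) (hP : P ≠ 0)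
    (hsimple : ∀ z : ℂ, Polynomial.aeval z P = 0 → Polynomial.aeval z P.derivative ≠ 0) :
    ∃ δ : ℝ, 0 < δ ∧
      (∀ x : ℝ, P.eval x = 0 → δ ≤ |P.derivative.eval x|) ∧
      ∀ x₀ : ℝ, P.eval x₀ = 0 →
        ∃ c : ℝ, 0 < c ∧ ∃ ε₀ : ℝ, 0 < ε₀ ∧
          ∀ ε : ℝ, 0 < ε → ε < ε₀ →
            volume {x : ℝ | |x - x₀| < c ∧ |P.eval x| ≤ ε} ≤
              ENNReal.ofReal ((4 / δ) * ε) := by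
  -- each real root has nonzero derivative
  have hroot : ∀ x : ℝ, P.eval x = 0 → P.derivative.eval x ≠ 0 := by
    intro x hx
    have h1 : Polynomial.aeval (algebraMap ℝ ℂ x) P = 0 := by
      rw [Polynomial.aeval_algebraMap_apply_eq_algebraMap_eval]
      simp [Polynomial.aeval_def, hx]
    have h2 := hsimple _ h1
    rw [Polynomial.aeval_algebraMap_apply_eq_algebraMap_eval] at h2
    intro hcon
    apply h2
    simp [Polynomial.aeval_def, hcon]
  set S := P.roots.toFinset with hS
  by_cases hne : S.Nonempty
  · have hδpos : 0 < S.inf' hne (fun x => |P.derivative.eval x|) := by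
      rw [Finset.lt_inf'_iff]
      intro x hxS
      have hx : P.eval x = 0 := (Polynomial.mem_roots hP).1 (Multiset.mem_toFinset.1 hxS)
      exact abs_pos.2 (hroot x hx)
    have hle : ∀ x : ℝ, P.eval x = 0 →
        S.inf' hne (fun x => |P.derivative.eval x|) ≤ |P.derivative.eval x| := by
      intro x hx
      apply Finset.inf'_le
      rw [hS, Multiset.mem_toFinset, Polynomial.mem_roots hP]
      exact hx
    exact ⟨_, hδpos, hle, fun x₀ hx₀ => aux_measure P _ hδpos x₀ (hle x₀ hx₀)⟩
  · refine ⟨1, one_pos, ?_, ?_⟩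
    · intro x hx
      exact absurd (Multiset.mem_toFinset.2 ((Polynomial.mem_roots hP).2 hx)) (fun h => hne ⟨x, h⟩)
    · intro x₀ hx₀
      exact absurd (Multiset.mem_toFinset.2 ((Polynomial.mem_roots hP).2 hx₀)) (fun h => hne ⟨x₀, h⟩)
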